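/- There exists an absolute constant C₀ such that for every positive integer s there exist a positive integer v ≤ 4 log₂ s + C₀ and a function h : {0,1}^s → {0,1}^v with the property that for all x, x' ∈ {0,1}^s with x ≠ x' and h(x) = h(x'), the sets D_2(x) and D_2(x') are disjoint; consequently, any x ∈ {0,1}^s can be recovered from h(x) together with any y ∈ D_2(x). -/

import Mathlib

/-- Delete from `x` the symbols at the positions in `S`. -/
def deleteIdxs (x : List Bool) (S : Finset ℕ) : List Bool :=
  ((List.range x.length).filter (fun i => decide (i ∉ S))).map (fun i => x.getD i false)

/-- `w` occurs in `x` at position `i`. -/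
def occursAt (w x : List Bool) (i : ℕ) : Prop := w <+: x.drop i

/-- The number of (possibly overlapping) occurrences of `w` in `x`. -/
def Nw (w x : List Bool) : ℕ :=
  ((Finset.range x.length).filter (fun i => w <+: x.drop i)).card

/-- The position in the shortened string of the junction produced by deleting position `k`. -/
def junction (S : Finset ℕ) (k : ℕ) : ℕ :=
  ((Finset.range k).filter (fun m => m ∉ S)).card

/-- `w` is preserved from `x` to `y`: some set `S` of deleted positions realizing `y`
destroys no occurrence of `w` in `x` and no occurrence of `w` in `y` spans a junction. -/
def Preserved (w x y : List Bool) : Prop :=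
  ∃ S : Finset ℕ,
    (∀ k ∈ S, k < x.length) ∧
    S.card + y.length = x.length ∧
    deleteIdxs x S = y ∧
    (∀ i, occursAt w x i → ∀ k ∈ S, ¬ (i ≤ k ∧ k < i + w.length)) ∧
    (∀ j, occursAt w y j → ∀ k ∈ S, ¬ (j < junction S k ∧ junction S k < j + w.length))

/-- `x` has a (maximal) run of length `ℓ` starting at position `i`. -/
def runAt (x : List Bool) (i ℓ : ℕ) : Prop :=
  0 < ℓ ∧ i + ℓ ≤ x.length ∧
  (∀ j, i ≤ j → j < i + ℓ → x.getD j false = x.getD i false) ∧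
  (i = 0 ∨ x.getD (i - 1) false ≠ x.getD i false) ∧
  (i + ℓ = x.length ∨ x.getD (i + ℓ) false ≠ x.getD i false)

/-- position `k` of `x` lies in a run of length `ℓ`. -/
def inRun (x : List Bool) (k ℓ : ℕ) : Prop := ∃ i, runAt x i ℓ ∧ i ≤ k ∧ k < i + ℓ

def w0000 : List Bool := [false, false, false, false]
def w1111 : List Bool := [true, true, true, true]
def w11011 : List Bool := [true, true, false, true, true]
def w110011 : List Bool := [true, true, false, false, true, true]

/-- The set of strings obtainable from `x` by deleting two symbols. -/
def D2 (x : List Bool) : Set (List Bool) :=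
  { y | ∃ i j : ℕ, i < j ∧ j < x.length ∧ y = deleteIdxs x ({i, j} : Finset ℕ) }

/-- run-length representation of the runs of ones, in order. -/
def tau1 (x : List Bool) : List ℕ :=
  ((x.splitBy (· == ·)).filter (fun r => r.headD false)).map List.length

/-- the subsequence of `tau1` of entries at least 2. -/
def tauGe2 (x : List Bool) : List ℕ := (tau1 x).filter (fun ℓ => decide (2 ≤ ℓ))

/-- sum of the odd-indexed entries. -/
def oddIdxSum (l : List ℕ) : ℕ :=
  ((Finset.range l.length).filter (fun i => i % 2 = 1)).sum (fun i => l.getD i 0)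



lemma map_getD_range' (x : List Bool) (a m : ℕ) (h : a + m ≤ x.length) :
    (List.range' a m).map (fun k => x.getD k false) = (x.drop a).take m := by
  apply List.ext_getElem
  · simp; omega
  · intro t h1 h2
    simp only [List.getElem_map, List.getElem_range', List.getElem_take, List.getElem_drop,
      one_mul]
    have hb : a + t < x.length := by simp at h1; omega
    simp [List.getD_eq_getElem?_getD, List.getElem?_eq_getElem hb]

lemma range_five_split (i j n : ℕ) (hij : i < j) (hj : j < n) :
    List.range n = List.range' 0 i ++ [i] ++ List.range' (i+1) (j-i-1) ++ [j]
      ++ List.range' (j+1) (n-j-1) := by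
  have h1 : [i] = List.range' i 1 := by simp
  have h2 : [j] = List.range' j 1 := by simp
  rw [h1, h2, List.range_eq_range']
  have e1 : List.range' 0 i ++ List.range' (0 + i) 1 = List.range' 0 (1 + i) :=
    by rw [List.range'_append_1]; congr 1; omega
  have e2 : List.range' 0 (1+i) ++ List.range' (0 + (1+i)) (j-i-1) = List.range' 0 ((j-i-1) + (1+i)) :=
    by rw [List.range'_append_1]; congr 1; omega
  have e3 : List.range' 0 ((j-i-1)+(1+i)) ++ List.range' (0 + ((j-i-1)+(1+i))) 1
      = List.range' 0 (1 + ((j-i-1)+(1+i))) := by rw [List.range'_append_1]; congr 1; omega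
  have e4 : List.range' 0 (1 + ((j-i-1)+(1+i))) ++ List.range' (0 + (1 + ((j-i-1)+(1+i)))) (n-j-1)
      = List.range' 0 ((n-j-1) + (1 + ((j-i-1)+(1+i)))) :=
    by rw [List.range'_append_1]; congr 1; omega
  rw [show (0:ℕ) + i = i by omega] at e1
  rw [show (0:ℕ) + (1+i) = i + 1 by omega] at e2
  rw [show (0:ℕ) + ((j-i-1)+(1+i)) = j by omega] at e3
  rw [show (0:ℕ) + (1 + ((j-i-1)+(1+i))) = j + 1 by omega] at e4
  rw [e1, e2, e3, e4, show (n-j-1) + (1 + ((j-i-1)+(1+i))) = n by omega]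

lemma deleteIdxs_pair (x : List Bool) (i j : ℕ) (hij : i < j) (hj : j < x.length) :
    deleteIdxs x {i, j} = x.take i ++ (x.drop (i+1)).take (j - i - 1) ++ x.drop (j+1) := by
  unfold deleteIdxs
  rw [range_five_split i j x.length hij hj]
  simp only [List.filter_append, List.map_append]
  have hp : ∀ m : ℕ, (decide (m ∉ ({i,j} : Finset ℕ)) = true) ↔ (m ≠ i ∧ m ≠ j) := by
    intro m; simp [Finset.mem_insert]
  have f1 : (List.range' 0 i).filter (fun m => decide (m ∉ ({i,j} : Finset ℕ)))
      = List.range' 0 i := by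
    apply List.filter_eq_self.mpr
    intro a ha
    rw [List.mem_range'_1] at ha
    rw [hp]; omega
  have f2 : ([i]).filter (fun m => decide (m ∉ ({i,j} : Finset ℕ))) = [] := by
    simp [Finset.mem_insert]
  have f3 : (List.range' (i+1) (j-i-1)).filter (fun m => decide (m ∉ ({i,j} : Finset ℕ)))
      = List.range' (i+1) (j-i-1) := by
    apply List.filter_eq_self.mpr
    intro a ha
    rw [List.mem_range'_1] at ha
    rw [hp]; omega
  have f4 : ([j]).filter (fun m => decide (m ∉ ({i,j} : Finset ℕ))) = [] := by
    simp [Finset.mem_insert]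
  have f5 : (List.range' (j+1) (x.length-j-1)).filter (fun m => decide (m ∉ ({i,j} : Finset ℕ)))
      = List.range' (j+1) (x.length-j-1) := by
    apply List.filter_eq_self.mpr
    intro a ha
    rw [List.mem_range'_1] at ha
    rw [hp]; omega
  rw [f1, f2, f3, f4, f5]
  rw [map_getD_range' x 0 i (by omega), map_getD_range' x (i+1) (j-i-1) (by omega),
    map_getD_range' x (j+1) (x.length-j-1) (by omega)]
  have d5 : List.take (x.length-j-1) (List.drop (j+1) x) = List.drop (j+1) x :=
    List.take_of_length_le (by simp; omega)
  rw [List.drop_zero, d5]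
  simp

lemma list_decomp (z : List Bool) (i j : ℕ) (hij : i < j) (hj : j < z.length) :
    z = z.take i ++ z.getD i false ::
      ((z.drop (i+1)).take (j-i-1) ++ z.getD j false :: z.drop (j+1)) := by
  conv_lhs => rw [← List.take_append_drop i z]
  congr 1
  rw [List.drop_eq_getElem_cons (by omega), List.getD_eq_getElem (hn := by omega)]
  congr 1
  conv_lhs => rw [← List.take_append_drop (j-i-1) (z.drop (i+1))]
  congr 1
  rw [List.drop_drop, show i+1 + (j-i-1) = j by omega,
    List.drop_eq_getElem_cons (by omega), List.getD_eq_getElem (hn := by omega)]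

lemma reconstruct_unique (z z' : List Bool) (hl : z.length = z'.length) (i j : ℕ)
    (hij : i < j) (hj : j < z.length)
    (h1 : deleteIdxs z {i,j} = deleteIdxs z' {i,j})
    (h2 : z.getD i false = z'.getD i false)
    (h3 : z.getD j false = z'.getD j false) : z = z' := by
  have hj' : j < z'.length := hl ▸ hj
  rw [deleteIdxs_pair z i j hij hj, deleteIdxs_pair z' i j hij hj'] at h1
  obtain ⟨hAB, hC⟩ := List.append_inj h1 (by simp; omega)
  obtain ⟨hA, hB⟩ := List.append_inj hAB (by simp; omega)
  rw [list_decomp z i j hij hj, list_decomp z' i j hij hj', hA, hB, hC, h2, h3]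

open scoped Classical in
noncomputable def recon (s i j : ℕ) (b b' : Bool) (y : List Bool) : List Bool :=
  if h : ∃ z : List Bool, z.length = s ∧ i < j ∧ j < s ∧ deleteIdxs z {i,j} = y
      ∧ z.getD i false = b ∧ z.getD j false = b' then h.choose else []

lemma recon_eq (s i j : ℕ) (z : List Bool) (h1 : z.length = s) (h2 : i < j) (h3 : j < s) :
    recon s i j (z.getD i false) (z.getD j false) (deleteIdxs z {i,j}) = z := by
  have hex : ∃ z' : List Bool, z'.length = s ∧ i < j ∧ j < s
      ∧ deleteIdxs z' {i,j} = deleteIdxs z {i,j}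
      ∧ z'.getD i false = z.getD i false ∧ z'.getD j false = z.getD j false :=
    ⟨z, h1, h2, h3, rfl, rfl, rfl⟩
  rw [recon, dif_pos hex]
  obtain ⟨e1, _, _, e4, e5, e6⟩ := hex.choose_spec
  exact reconstruct_unique _ z (by omega) i j h2 (by omega) e4 e5 e6

/-- every distinct length-`s` string whose 2-deletion ball meets that of `x`
is in the image of a small finite set. -/
lemma neighbor_mem_image (s : ℕ) (x : List Bool) (hx : x.length = s)
    (u : List Bool) (hu : u.length = s) (hne : (D2 x ∩ D2 u).Nonempty) :
    u ∈ Finset.image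
      (fun p : ((ℕ × ℕ) × (ℕ × ℕ)) × (Bool × Bool) =>
        recon s p.1.2.1 p.1.2.2 p.2.1 p.2.2 (deleteIdxs x {p.1.1.1, p.1.1.2}))
      (((Finset.range s ×ˢ Finset.range s) ×ˢ (Finset.range s ×ˢ Finset.range s)) ×ˢ
        (Finset.univ ×ˢ Finset.univ)) := by
  obtain ⟨y, hyx, hyu⟩ := hne
  obtain ⟨i', j', hij', hj', hy1⟩ := hyx
  obtain ⟨i, j, hij, hj, hy2⟩ := hyu
  rw [Finset.mem_image]
  refine ⟨(((i', j'), (i, j)), (u.getD i false, u.getD j false)), ?_, ?_⟩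
  · simp only [Finset.mem_product, Finset.mem_range, Finset.mem_univ, and_true]
    exact ⟨⟨by omega, by omega⟩, by omega, by omega⟩
  · show recon s i j _ _ (deleteIdxs x {i', j'}) = u
    rw [← hy1, hy2]
    exact recon_eq s i j u hu hij (by omega)

def pickGreedy (N n : ℕ) (B : ℕ → ℕ → Bool) (prev : List ℕ) : ℕ :=
  let used := ((Finset.range n).filter (fun m => B m n)).image (fun m => prev.getD m 0)
  let avail := Finset.range N \ used
  if h : avail.Nonempty then avail.min' h else 0

def greedyList (N : ℕ) (B : ℕ → ℕ → Bool) : ℕ → List ℕ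
  | 0 => []
  | n+1 => greedyList N B n ++ [pickGreedy N n B (greedyList N B n)]

def gcolor (N : ℕ) (B : ℕ → ℕ → Bool) (n : ℕ) : ℕ := (greedyList N B (n+1)).getD n 0

lemma greedyList_length (N : ℕ) (B : ℕ → ℕ → Bool) (n : ℕ) :
    (greedyList N B n).length = n := by
  induction n with
  | zero => rfl
  | succ n ih => simp [greedyList, ih]

lemma gcolor_eq (N : ℕ) (B : ℕ → ℕ → Bool) (n : ℕ) :
    gcolor N B n = pickGreedy N n B (greedyList N B n) := by
  rw [gcolor, greedyList, List.getD_append_right _ _ _ _ (by rw [greedyList_length]),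
    greedyList_length]
  simp

lemma greedyList_getD (N : ℕ) (B : ℕ → ℕ → Bool) {m n : ℕ} (h : m < n) :
    (greedyList N B n).getD m 0 = gcolor N B m := by
  induction n with
  | zero => omega
  | succ n ih =>
    rcases Nat.lt_or_ge m n with hc | hc
    · rw [greedyList, List.getD_append _ _ _ _ (by rw [greedyList_length]; omega), ih hc]
    · have : m = n := by omega
      subst this
      rfl

lemma gcolor_spec (N : ℕ) (B : ℕ → ℕ → Bool) (n : ℕ)
    (hdeg : ((Finset.range n).filter (fun m => B m n)).card < N) :
    gcolor N B n < N ∧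
      gcolor N B n ∉ ((Finset.range n).filter (fun m => B m n)).image
        (fun m => gcolor N B m) := by
  have himg : ((Finset.range n).filter (fun m => B m n)).image
        (fun m => (greedyList N B n).getD m 0)
      = ((Finset.range n).filter (fun m => B m n)).image (fun m => gcolor N B m) := by
    apply Finset.image_congr
    intro a ha
    simp only [Finset.coe_filter, Set.mem_setOf_eq, Finset.mem_range] at ha
    exact greedyList_getD N B ha.1
  set used := ((Finset.range n).filter (fun m => B m n)).image
    (fun m => (greedyList N B n).getD m 0) with hused
  have hcard : used.card < N := by
    calc used.card ≤ ((Finset.range n).filter (fun m => B m n)).card :=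
          Finset.card_image_le
      _ < N := hdeg
  have hne : (Finset.range N \ used).Nonempty := by
    by_contra hempty
    rw [Finset.not_nonempty_iff_eq_empty, Finset.sdiff_eq_empty_iff_subset] at hempty
    have := Finset.card_le_card hempty
    simp only [Finset.card_range] at this
    omega
  have : gcolor N B n = (Finset.range N \ used).min' hne := by
    rw [gcolor_eq, pickGreedy]
    simp only [← hused, dif_pos hne]
  have hmem := Finset.min'_mem (Finset.range N \ used) hne
  rw [← this] at hmem
  rw [Finset.mem_sdiff, Finset.mem_range] at hmem
  rw [← himg]
  exact hmem

lemma gcolor_proper (N : ℕ) (B : ℕ → ℕ → Bool) {m n : ℕ} (hmn : m < n) (hB : B m n = true)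
    (hdeg : ((Finset.range n).filter (fun m => B m n)).card < N) :
    gcolor N B m ≠ gcolor N B n := by
  intro hEq
  have := (gcolor_spec N B n hdeg).2
  apply this
  rw [← hEq]
  exact Finset.mem_image_of_mem _ (by simp [Finset.mem_filter, hB]; omega)

lemma testBit_inj (v a b : ℕ) (ha : a < 2^v) (hb : b < 2^v)
    (h : ∀ k, k < v → a.testBit k = b.testBit k) : a = b := by
  apply Nat.eq_of_testBit_eq
  intro k
  by_cases hk : k < v
  · exact h k hk
  · rw [Nat.testBit_eq_false_of_lt (lt_of_lt_of_le ha (Nat.pow_le_pow_right (by norm_num) (by omega))),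
      Nat.testBit_eq_false_of_lt (lt_of_lt_of_le hb (Nat.pow_le_pow_right (by norm_num) (by omega)))]

example (s : ℕ) : Fintype (List.Vector Bool s) := inferInstance


/-- There is a hash `h : {0,1}^s → {0,1}^v` with `v ≤ 4 log₂ s + C₀` such that distinct
strings with the same hash have disjoint two-deletion balls; consequently any `x` can be
recovered from `h x` together with any `y ∈ D2 x`. -/
theorem hash_for_two_deletions :
    ∃ C₀ : ℝ, ∀ s : ℕ, 0 < s →
      ∃ v : ℕ, 0 < v ∧ (v : ℝ) ≤ 4 * Real.logb 2 s + C₀ ∧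
        ∃ h : List Bool → (Fin v → Bool),
          (∀ x x' : List Bool, x.length = s → x'.length = s → x ≠ x' → h x = h x' →
            D2 x ∩ D2 x' = ∅) ∧
          ∃ dec : (Fin v → Bool) → List Bool → List Bool,
            ∀ x : List Bool, x.length = s → ∀ y ∈ D2 x, dec (h x) y = x := by
  classical
  refine ⟨7, ?_⟩
  intro s hs
  set L := Nat.log 2 s with hL
  set v := 4 * L + 7 with hv
  set N := 4 * s ^ 4 + 1 with hNdef
  -- the numeric bounds
  have hsL : s < 2 ^ (L + 1) := Nat.lt_pow_succ_log_self (by norm_num) s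
  have hNv : N ≤ 2 ^ v := by
    have h1 : s ^ 4 < (2 ^ (L + 1)) ^ 4 := Nat.pow_lt_pow_left hsL (by norm_num)
    have h2 : (2 : ℕ) ^ v = 8 * (2 ^ (L + 1)) ^ 4 := by
      rw [← pow_mul, hv]
      rw [show (L + 1) * 4 = 4 * L + 4 by ring, show (8 : ℕ) = 2 ^ 3 by norm_num, ← pow_add]
      ring_nf
    have h3 : 1 ≤ s ^ 4 := Nat.one_le_iff_ne_zero.mpr (by positivity)
    rw [h2, hNdef]
    nlinarith
  refine ⟨v, by omega, ?_, ?_⟩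
  · have h1 : (L : ℝ) ≤ Real.logb 2 s := Real.natLog_le_logb s 2
    rw [hv]
    push_cast
    linarith
  -- the construction
  set M := Fintype.card (List.Vector Bool s) with hM
  set e := Fintype.equivFin (List.Vector Bool s) with he
  set B : ℕ → ℕ → Bool := fun a b =>
    if h : a < M ∧ b < M then
      decide ((e.symm ⟨a, h.1⟩).1 ≠ (e.symm ⟨b, h.2⟩).1 ∧
        (D2 (e.symm ⟨a, h.1⟩).1 ∩ D2 (e.symm ⟨b, h.2⟩).1).Nonempty)
    else false with hB
  have hdeg : ∀ n : ℕ, ((Finset.range n).filter (fun m => B m n)).card < N := by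
    intro n
    by_cases hn : n < M
    · set x := (e.symm ⟨n, hn⟩).1 with hx
      have hxlen : x.length = s := (e.symm ⟨n, hn⟩).2
      set K := (((Finset.range s ×ˢ Finset.range s) ×ˢ (Finset.range s ×ˢ Finset.range s)) ×ˢ
        ((Finset.univ : Finset Bool) ×ˢ (Finset.univ : Finset Bool))) with hK
      set G := fun p : ((ℕ × ℕ) × (ℕ × ℕ)) × (Bool × Bool) =>
        recon s p.1.2.1 p.1.2.2 p.2.1 p.2.2 (deleteIdxs x {p.1.1.1, p.1.1.2}) with hG
      have hBtrue : ∀ m, B m n = true → ∃ hm : m < M,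
          (e.symm ⟨m, hm⟩).1 ≠ x ∧ (D2 (e.symm ⟨m, hm⟩).1 ∩ D2 x).Nonempty := by
        intro m hmB
        simp only [hB] at hmB
        by_cases hc : m < M ∧ n < M
        · rw [dif_pos hc, decide_eq_true_eq] at hmB
          exact ⟨hc.1, hmB⟩
        · rw [dif_neg hc] at hmB
          exact absurd hmB (by simp)
      have hcard := Finset.card_le_card_of_injOn
        (f := fun m => if hm : m < M then (e.symm ⟨m, hm⟩).1 else [])
        (s := (Finset.range n).filter (fun m => B m n)) (t := K.image G)
        (by
          intro m hm
          rw [Finset.mem_coe, Finset.mem_filter] at hm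
          obtain ⟨hmM, hne, hint⟩ := hBtrue m hm.2
          simp only [dif_pos hmM]
          exact neighbor_mem_image s x hxlen _ (e.symm ⟨m, hmM⟩).2
            (by rw [Set.inter_comm]; exact hint))
        (by
          intro m1 hm1 m2 hm2 hf
          simp only [Finset.coe_filter, Set.mem_setOf_eq, Finset.mem_range] at hm1 hm2
          obtain ⟨hM1, _, _⟩ := hBtrue m1 hm1.2
          obtain ⟨hM2, _, _⟩ := hBtrue m2 hm2.2
          simp only [dif_pos hM1, dif_pos hM2] at hf
          have := e.symm.injective (Subtype.ext hf)
          exact congrArg Fin.val this)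
      calc ((Finset.range n).filter (fun m => B m n)).card
          ≤ (K.image G).card := hcard
        _ ≤ K.card := Finset.card_image_le
        _ = s * s * (s * s) * (2 * 2) := by
            simp [hK, Finset.card_product]
        _ < N := by rw [hNdef]; nlinarith
    · have hBf : ∀ m, B m n = false := by
        intro m
        exact dif_neg (fun hc => hn hc.2)
      have : (Finset.range n).filter (fun m => B m n) = ∅ := by
        apply Finset.filter_eq_empty_iff.mpr
        intro m _
        simp [hBf m]
      rw [this, Finset.card_empty, hNdef]
      positivity
  have hglt : ∀ n, gcolor N B n < N := fun n => (gcolor_spec N B n (hdeg n)).1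
  set hashN : List Bool → ℕ := fun z =>
    if hz : z.length = s then gcolor N B ((e ⟨z, hz⟩) : ℕ) else 0 with hhashN
  set hsh : List Bool → (Fin v → Bool) := fun z k => Nat.testBit (hashN z) k with hhsh
  have hashval : ∀ z (hz : z.length = s), hashN z = gcolor N B ((e ⟨z, hz⟩) : ℕ) := by
    intro z hz
    rw [hhashN]
    exact dif_pos hz
  have hashlt : ∀ z, hashN z < 2 ^ v := by
    intro z
    by_cases hz : z.length = s
    · rw [hashval z hz]; exact lt_of_lt_of_le (hglt _) hNv
    · have h0 : hashN z = 0 := dif_neg hz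
      rw [h0]; positivity
  have hdisj : ∀ x x' : List Bool, x.length = s → x'.length = s → x ≠ x' → hsh x = hsh x' →
      D2 x ∩ D2 x' = ∅ := by
    intro x x' hx hx' hne hheq
    by_contra hcon
    have hnonempty : (D2 x ∩ D2 x').Nonempty := Set.nonempty_iff_ne_empty.mpr hcon
    have hcx : hashN x = hashN x' := by
      apply testBit_inj v _ _ (hashlt x) (hashlt x')
      intro k hk
      have := congrFun hheq ⟨k, hk⟩
      rw [hhsh] at this
      exact this
    have hg : gcolor N B ((e ⟨x, hx⟩ : Fin M) : ℕ) = gcolor N B ((e ⟨x', hx'⟩ : Fin M) : ℕ) := by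
      rw [← hashval x hx, ← hashval x' hx', hcx]
    have hab : ((e ⟨x, hx⟩ : Fin M) : ℕ) ≠ ((e ⟨x', hx'⟩ : Fin M) : ℕ) := by
      intro hEq
      apply hne
      have h2 : (e ⟨x, hx⟩ : Fin M) = e ⟨x', hx'⟩ := Fin.val_injective hEq
      have h3 := e.injective h2
      exact congrArg Subtype.val h3
    have hBsym : ∀ (z z' : List Bool) (hz : z.length = s) (hz' : z'.length = s),
        z ≠ z' → (D2 z ∩ D2 z').Nonempty →
        B ((e ⟨z, hz⟩ : Fin M) : ℕ) ((e ⟨z', hz'⟩ : Fin M) : ℕ) = true := by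
      intro z z' hz hz' hzne hzint
      refine Eq.trans (dif_pos ⟨(e ⟨z, hz⟩).isLt, (e ⟨z', hz'⟩).isLt⟩) ?_
      rw [decide_eq_true_eq]
      have ez : (⟨((e ⟨z, hz⟩ : Fin M) : ℕ), (e ⟨z, hz⟩).isLt⟩ : Fin M) = e ⟨z, hz⟩ := Fin.eta _ _
      have ez' : (⟨((e ⟨z', hz'⟩ : Fin M) : ℕ), (e ⟨z', hz'⟩).isLt⟩ : Fin M) = e ⟨z', hz'⟩ :=
        Fin.eta _ _
      have k1 : (e.symm (e ⟨z, hz⟩)).1 = z := congrArg Subtype.val (e.symm_apply_apply _)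
      have k2 : (e.symm (e ⟨z', hz'⟩)).1 = z' := congrArg Subtype.val (e.symm_apply_apply _)
      rw [ez, ez', k1, k2]
      exact ⟨hzne, hzint⟩
    rcases lt_or_gt_of_ne hab with hlt | hgt
    · exact gcolor_proper N B hlt (hBsym x x' hx hx' hne hnonempty) (hdeg _) hg
    · exact gcolor_proper N B hgt
        (hBsym x' x hx' hx (Ne.symm hne) (by rwa [Set.inter_comm])) (hdeg _) hg.symm
  set decf : (Fin v → Bool) → List Bool → List Bool := fun c y =>
    if hxy : ∃ z : List Bool, z.length = s ∧ hsh z = c ∧ y ∈ D2 z then hxy.choose else []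
    with hdecf
  refine ⟨hsh, hdisj, decf, ?_⟩
  intro x hx y hy
  have hex : ∃ z : List Bool, z.length = s ∧ hsh z = hsh x ∧ y ∈ D2 z := ⟨x, hx, rfl, hy⟩
  rw [show decf (hsh x) y = hex.choose from dif_pos hex]
  obtain ⟨hz1, hz2, hz3⟩ := hex.choose_spec
  by_contra hne
  have hempty := hdisj _ _ hz1 hx hne hz2
  have : y ∈ D2 hex.choose ∩ D2 x := ⟨hz3, hy⟩
  rw [hempty] at this
  exact this
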